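/- Let n ≥ 3, let 1 ≤ r < (n−1)(n−2)/2 + 1, and let 𝔽 be a field whose multiplicative group 𝔽* contains a free abelian subgroup of rank r. Then there exists a multiplicatively antisymmetric n×n matrix 𝔮 = (q_{ij}) over 𝔽 such that the λ-group Λ of 𝔮 is a free abelian group of rank r and such that the quantum affine space 𝒪_𝔮 admits an 𝔽-algebra automorphism that is not scalar; in fact there is an injective group homomorphism from the additive group (𝔽,+) into the group of 𝔽-algebra automorphisms of 𝒪_𝔮 whose non-identity values are non-scalar automorphisms. -/

import Mathlib

/-- The defining relations of the multiparameter quantum affine space: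
`X i * X j = q i j • (X j * X i)` for `i < j`. -/
inductive QuantumRel (F : Type*) [Field F] (n : ℕ) (q : Fin n → Fin n → F) :
    FreeAlgebra F (Fin n) → FreeAlgebra F (Fin n) → Prop
  | rel (i j : Fin n) (h : i < j) :
      QuantumRel F n q (FreeAlgebra.ι F i * FreeAlgebra.ι F j)
        (q i j • (FreeAlgebra.ι F j * FreeAlgebra.ι F i))

/-- The multiparameter quantum affine space `𝒪_𝔮`. -/
abbrev QuantumAffineSpace (F : Type*) [Field F] (n : ℕ) (q : Fin n → Fin n → F) :=
  RingQuot (QuantumRel F n q)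

/-- The canonical generators `X i` of the quantum affine space. -/
noncomputable def QX (F : Type*) [Field F] (n : ℕ) (q : Fin n → Fin n → F) (i : Fin n) :
    QuantumAffineSpace F n q :=
  RingQuot.mkAlgHom F (QuantumRel F n q) (FreeAlgebra.ι F i)

/-- A multiplicatively antisymmetric matrix: nonzero entries, `q i i = 1`, `q j i = (q i j)⁻¹`. -/
def MultAntisym (F : Type*) [Field F] {n : ℕ} (q : Fin n → Fin n → F) : Prop :=
  (∀ i j, q i j ≠ 0) ∧ (∀ i, q i i = 1) ∧ (∀ i j, q j i = (q i j)⁻¹)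

/-- An `F`-algebra automorphism of the quantum affine space is scalar if it sends each
generator `X i` to a nonzero scalar multiple of itself. -/
def IsScalarAut (F : Type*) [Field F] (n : ℕ) (q : Fin n → Fin n → F)
    (σ : QuantumAffineSpace F n q ≃ₐ[F] QuantumAffineSpace F n q) : Prop :=
  ∃ a : Fin n → F, (∀ i, a i ≠ 0) ∧ ∀ i, σ (QX F n q i) = a i • QX F n q i

/-- `E = 0`: each set `Λ_i` is empty. -/
def LambdaEmpty (F : Type*) [Field F] {n : ℕ} (q : Fin n → Fin n → F) : Prop :=
  ∀ i : Fin n, ∀ ν : Fin n → ℕ,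
    ¬ (ν i = 0 ∧ ∀ j, j ≠ i → (∏ k, q k j ^ ν k) = q i j)

/-- The `λ`-group: the subgroup of `Fˣ` generated by the multiparameters `q i j`, `i < j`. -/
def lambdaGroup (F : Type*) [Field F] {n : ℕ} (q : Fin n → Fin n → F) : Subgroup Fˣ :=
  Subgroup.closure {u : Fˣ | ∃ i j : Fin n, i < j ∧ (u : F) = q i j}

section Aux

variable {F : Type*} [Field F] {n : ℕ} [NeZero n] (q : Fin n → Fin n → F)

lemma fin_not_lt_zero (i : Fin n) : ¬ i < 0 := by
  simp [Fin.lt_def, Fin.val_zero]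

lemma QX_comm {i j : Fin n} (h : i < j) :
    QX F n q i * QX F n q j = q i j • (QX F n q j * QX F n q i) := by
  have := RingQuot.mkAlgHom_rel F (QuantumRel.rel (q := q) i j h)
  simpa [QX, map_mul, map_smul] using this

/-- Evaluation sending `X 0 ↦ X`, `X i ↦ 0` for `i ≠ 0`. -/
noncomputable def qEval : QuantumAffineSpace F n q →ₐ[F] Polynomial F :=
  RingQuot.liftAlgHom F ⟨(FreeAlgebra.lift F
      (fun i : Fin n => if i = 0 then Polynomial.X else 0) :
        FreeAlgebra F (Fin n) →ₐ[F] Polynomial F), by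
    rintro x y ⟨i, j, h⟩
    by_cases hi : i = 0
    · have hj : j ≠ 0 := by rintro rfl; exact absurd h (fin_not_lt_zero i)
      simp [hi, hj]
    · simp [hi]⟩

lemma qEval_QX (i : Fin n) :
    qEval q (QX F n q i) = if i = 0 then Polynomial.X else 0 := by
  rw [QX, qEval, RingQuot.liftAlgHom_mkAlgHom_apply, FreeAlgebra.lift_ι_apply]

variable (hq0 : ∀ j : Fin n, (0 : Fin n) < j → q 0 j = 1)

include hq0

lemma QX0_comm {j : Fin n} : QX F n q 0 * QX F n q j = QX F n q j * QX F n q 0 := by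
  rcases lt_trichotomy (0 : Fin n) j with h | h | h
  · rw [QX_comm q h, hq0 j h, one_smul]
  · rw [h]
  · exact absurd h (fin_not_lt_zero j)

/-- The shift endomorphism `X 0 ↦ X 0 + b`, `X i ↦ X i`. -/
noncomputable def qShift (b : F) :
    QuantumAffineSpace F n q →ₐ[F] QuantumAffineSpace F n q :=
  RingQuot.liftAlgHom F ⟨(FreeAlgebra.lift F
      (fun i : Fin n => if i = 0 then QX F n q 0 + algebraMap F _ b else QX F n q i) :
        FreeAlgebra F (Fin n) →ₐ[F] QuantumAffineSpace F n q), by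
    rintro x y ⟨i, j, h⟩
    have hj : j ≠ 0 := by rintro rfl; exact absurd h (fin_not_lt_zero i)
    simp only [map_mul, map_smul, FreeAlgebra.lift_ι_apply, if_neg hj]
    by_cases hi : i = 0
    · subst hi
      rw [if_pos rfl, hq0 j h, one_smul, add_mul, mul_add, QX0_comm q hq0,
        Algebra.commutes]
    · rw [if_neg hi]
      exact QX_comm q h⟩

lemma qShift_QX (b : F) (i : Fin n) :
    qShift q hq0 b (QX F n q i)
      = if i = 0 then QX F n q 0 + algebraMap F _ b else QX F n q i := by
  rw [QX, qShift, RingQuot.liftAlgHom_mkAlgHom_apply, FreeAlgebra.lift_ι_apply]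
  rfl

lemma qShift_comp (b c : F) :
    (qShift q hq0 b).comp (qShift q hq0 c) = qShift q hq0 (b + c) := by
  apply RingQuot.ringQuot_ext'
  apply FreeAlgebra.hom_ext
  funext i
  show qShift q hq0 b (qShift q hq0 c (QX F n q i)) = qShift q hq0 (b + c) (QX F n q i)
  by_cases hi : i = 0
  · subst hi
    rw [qShift_QX, qShift_QX, if_pos rfl, if_pos rfl, map_add, qShift_QX,
      if_pos rfl, AlgHom.commutes, map_add, add_assoc]
  · rw [qShift_QX, qShift_QX, if_neg hi, if_neg hi, qShift_QX, if_neg hi]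

lemma qShift_zero : qShift q hq0 0 = AlgHom.id F _ := by
  apply RingQuot.ringQuot_ext'
  apply FreeAlgebra.hom_ext
  funext i
  show qShift q hq0 0 (QX F n q i) = QX F n q i
  rw [qShift_QX]
  split <;> simp_all

/-- The shift automorphism. -/
noncomputable def qAut (b : F) :
    QuantumAffineSpace F n q ≃ₐ[F] QuantumAffineSpace F n q :=
  AlgEquiv.ofAlgHom (qShift q hq0 b) (qShift q hq0 (-b))
    (by rw [qShift_comp, add_neg_cancel, qShift_zero])
    (by rw [qShift_comp, neg_add_cancel, qShift_zero])

lemma qAut_apply (b : F) (x) : qAut q hq0 b x = qShift q hq0 b x := rfl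

/-- The family of shift automorphisms as a homomorphism from `(F, +)`. -/
noncomputable def qPhi : Multiplicative F →*
    (QuantumAffineSpace F n q ≃ₐ[F] QuantumAffineSpace F n q) where
  toFun b := qAut q hq0 (Multiplicative.toAdd b)
  map_one' := by
    apply AlgEquiv.ext
    intro x
    show qShift q hq0 _ x = x
    rw [toAdd_one, qShift_zero]
    rfl
  map_mul' b c := by
    apply AlgEquiv.ext
    intro x
    rw [AlgEquiv.mul_apply]
    show qShift q hq0 _ x = qShift q hq0 _ (qShift q hq0 _ x)
    rw [← AlgHom.comp_apply, qShift_comp, toAdd_mul, add_comm]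

end Aux
theorem exists_nonscalar_aut_small_lambda_group (F : Type*) [Field F]
    (n r : ℕ) (hn : 3 ≤ n) (hr : 1 ≤ r) (hrlt : r < (n - 1) * (n - 2) / 2 + 1)
    (g : Fin r → Fˣ) (hg : ∀ a : Fin r → ℤ, (∏ s, g s ^ a s) = 1 → a = 0) :
    ∃ q : Fin n → Fin n → F, MultAntisym F q ∧
      Nonempty ((lambdaGroup F q) ≃* Multiplicative (Fin r → ℤ)) ∧
      ∃ φ : Multiplicative F →*
          (QuantumAffineSpace F n q ≃ₐ[F] QuantumAffineSpace F n q),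
        Function.Injective φ ∧
        ∀ b : Multiplicative F, b ≠ 1 → ¬ IsScalarAut F n q (φ b) := by
  classical
  haveI : NeZero n := ⟨by omega⟩
  -- Step 1: an embedding of `Fin r` into the pairs `(i, j)` with `0 < i < j`.
  have hsum : ∑ j ∈ Finset.range n, (j - 1) = (n - 1) * (n - 2) / 2 := by
    obtain ⟨m, rfl⟩ : ∃ m, n = m + 1 := ⟨n - 1, by omega⟩
    rw [Finset.sum_range_succ' (fun j => j - 1) m]
    simp only [Nat.add_sub_cancel, Nat.zero_sub, add_zero]
    rw [Finset.sum_range_id]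
    congr 1 <;> omega
  have hcard : Fintype.card (Fin r) ≤ Fintype.card (Σ j : Fin n, Fin ((j : ℕ) - 1)) := by
    rw [Fintype.card_fin, Fintype.card_sigma]
    simp only [Fintype.card_fin]
    rw [Fin.sum_univ_eq_sum_range (fun j => j - 1) n, hsum]
    omega
  obtain ⟨e⟩ := Function.Embedding.nonempty_of_card_le hcard
  set p : Fin r → Fin n × Fin n := fun s =>
    (⟨((e s).2 : ℕ) + 1, by
        have h1 := (e s).2.isLt
        have h2 := (e s).1.isLt
        omega⟩, (e s).1) with hpdef
  have hp1 : ∀ s, (0 : Fin n) < (p s).1 := by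
    intro s
    simp [p, Fin.lt_def, Fin.val_zero]
  have hplt : ∀ s, (p s).1 < (p s).2 := by
    intro s
    have h1 := (e s).2.isLt
    simp only [p, Fin.lt_def]
    omega
  have hpinj : Function.Injective p := by
    intro s t hst
    have h2 : (e s).1 = (e t).1 := congrArg Prod.snd hst
    have h1 : ((e s).2 : ℕ) = ((e t).2 : ℕ) := by
      have := congrArg (fun x => (x.1 : ℕ)) hst
      simpa [p] using this
    apply e.injective
    exact Sigma.ext h2 ((Fin.heq_ext_iff (by rw [h2])).2 h1)
  -- Step 2: the matrix q
  set v : Fin n → Fin n → F := fun i j =>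
    if h : ∃ s, p s = (i, j) then (g h.choose : F) else 1 with hvdef
  set q : Fin n → Fin n → F := fun i j =>
    if i < j then v i j else if j < i then (v j i)⁻¹ else 1 with hqdef
  have hv_ne : ∀ i j, v i j ≠ 0 := by
    intro i j
    simp only [v]
    split
    · exact Units.ne_zero _
    · exact one_ne_zero
  have hv_p : ∀ s, v (p s).1 (p s).2 = (g s : F) := by
    intro s
    have hex : ∃ t, p t = ((p s).1, (p s).2) := ⟨s, rfl⟩
    simp only [v, dif_pos hex]
    have : hex.choose = s := hpinj (hex.choose_spec.trans rfl)
    rw [this]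
  have hq_lt : ∀ {i j : Fin n}, i < j → q i j = v i j := by
    intro i j h
    simp [q, h]
  have hq0 : ∀ j : Fin n, (0 : Fin n) < j → q 0 j = 1 := by
    intro j hj
    rw [hq_lt hj]
    simp only [v]
    rw [dif_neg]
    rintro ⟨s, hs⟩
    have h1 := hp1 s
    rw [hs] at h1
    exact absurd h1 (lt_irrefl _)
  have hset : ∀ i j : Fin n, i < j → (q i j = 1 ∨ ∃ s, q i j = (g s : F)) := by
    intro i j h
    rw [hq_lt h]
    simp only [v]
    split
    · exact Or.inr ⟨_, rfl⟩
    · exact Or.inl rfl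
  -- Step 3: the homomorphism detecting the λ-group
  set f : Multiplicative (Fin r → ℤ) →* Fˣ :=
    { toFun := fun a => ∏ s, g s ^ (Multiplicative.toAdd a) s
      map_one' := by simp
      map_mul' := by
        intro a b
        simp [zpow_add, Finset.prod_mul_distrib] } with hfdef
  have hfinj : Function.Injective f := by
    intro a b hab
    have hab' : (∏ s, g s ^ (Multiplicative.toAdd a) s)
        = ∏ s, g s ^ (Multiplicative.toAdd b) s := hab
    have h1 : (∏ s, g s ^ ((Multiplicative.toAdd a - Multiplicative.toAdd b) s)) = 1 := by
      simp only [Pi.sub_apply, zpow_sub]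
      rw [Finset.prod_mul_distrib, Finset.prod_inv_distrib, hab', mul_inv_cancel]
    have h2 := hg _ h1
    have h3 : Multiplicative.toAdd a = Multiplicative.toAdd b := by
      rwa [sub_eq_zero] at h2
    exact Multiplicative.toAdd.injective h3
  have hrange : lambdaGroup F q = f.range := by
    apply le_antisymm
    · rw [lambdaGroup, Subgroup.closure_le]
      rintro u ⟨i, j, hij, hu⟩
      rcases hset i j hij with h | ⟨s, h⟩
      · have hu1 : u = 1 := Units.ext (by rw [hu, h]; rfl)
        rw [hu1]
        exact one_mem _
      · have hu1 : u = g s := Units.ext (by rw [hu, h])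
        rw [hu1]
        refine ⟨Multiplicative.ofAdd (Pi.single s 1), ?_⟩
        rw [hfdef]
        simp only [MonoidHom.coe_mk, OneHom.coe_mk, toAdd_ofAdd]
        rw [Fintype.prod_eq_single s (fun t ht => by
          rw [Pi.single_eq_of_ne ht, zpow_zero]), Pi.single_eq_same, zpow_one]
    · intro u hu
      obtain ⟨a, rfl⟩ := hu
      show (∏ s, g s ^ (Multiplicative.toAdd a) s) ∈ lambdaGroup F q
      apply Subgroup.prod_mem
      intro s _
      apply Subgroup.zpow_mem
      apply Subgroup.subset_closure
      exact ⟨(p s).1, (p s).2, hplt s, by rw [hq_lt (hplt s), hv_p s]⟩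
  have key : ∀ b : Multiplicative F, qPhi q hq0 b (QX F n q 0)
      = QX F n q 0 + algebraMap F _ (Multiplicative.toAdd b) := by
    intro b
    show qAut q hq0 _ (QX F n q 0) = _
    rw [qAut_apply, qShift_QX, if_pos rfl]
  refine ⟨q, ⟨?_, ?_, ?_⟩, ⟨(MulEquiv.subgroupCongr hrange).trans
      (MonoidHom.ofInjective hfinj).symm⟩, qPhi q hq0, ?_, ?_⟩
  · intro i j
    simp only [q]
    split_ifs
    · exact hv_ne i j
    · exact inv_ne_zero (hv_ne j i)
    · exact one_ne_zero
  · intro i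
    simp [q, lt_irrefl]
  · intro i j
    rcases lt_trichotomy i j with h | h | h
    · simp only [q]
      rw [if_neg (asymm h), if_pos h, if_pos h]
    · subst h
      simp [q, lt_irrefl]
    · simp only [q]
      rw [if_pos h, if_neg (asymm h), if_pos h, inv_inv]
  · -- injectivity
    intro b c hbc
    have h1 : QX F n q 0 + algebraMap F _ (Multiplicative.toAdd b)
        = QX F n q 0 + algebraMap F _ (Multiplicative.toAdd c) := by
      rw [← key b, ← key c, hbc]
    have h2 := add_left_cancel h1
    have h3 := congrArg (qEval q) h2
    rw [AlgHom.commutes, AlgHom.commutes] at h3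
    rw [Polynomial.algebraMap_eq] at h3
    exact Multiplicative.toAdd.injective (Polynomial.C_injective h3)
  · -- non-scalar
    rintro b hb ⟨a, ha, hsc⟩
    have h0 := hsc 0
    rw [key b] at h0
    have h1 := congrArg (qEval q) h0
    rw [map_add, AlgHom.commutes, map_smul, qEval_QX, if_pos rfl] at h1
    have h2 := congrArg (fun P => Polynomial.coeff P 0) h1
    simp only [Polynomial.coeff_add, Polynomial.coeff_X_zero,
      Polynomial.algebraMap_eq, Polynomial.coeff_C_zero, Polynomial.coeff_smul,
      smul_zero, zero_add, smul_eq_mul, mul_zero] at h2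
    exact hb (by
      have hb2 : b = Multiplicative.ofAdd (Multiplicative.toAdd b) := rfl
      rw [hb2, h2, ofAdd_zero])
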